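/- Let n, m, k ≥ 1, λ > 0, o ∈ ℝⁿ, D an m×n real matrix, M a k×m real matrix, and let g₁ : ℝᵐ → ℝ and g₂ : ℝᵐ → ℝ be convex functions. If the matrix H = λIₙ − Dᵀ Mᵀ M D is positive semidefinite, then the function J̃(x, y) = (λ/2)‖x − o‖₂² − (1/2)‖M D x‖₂² + (1/2)‖M y‖₂² + g₁(D x) + g₂(Mᵀ M (D x − y)) is convex on ℝⁿ × ℝᵐ. -/

import Mathlib

open Matrix

private lemma aux_ineq (a b P Q S : ℝ) (ha : 0 ≤ a) (hb : 0 ≤ b) (hab : a + b = 1)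
    (key : 0 ≤ P - Q - (Q - S)) :
    a * (a * P + b * Q) + b * (a * Q + b * S) ≤ a * P + b * S := by
  have h : a*P+b*S - (a*(a*P+b*Q)+b*(a*Q+b*S)) = a*b*(P - Q - (Q - S)) := by
    have hb' : b = 1 - a := by linarith
    subst hb'; ring
  nlinarith [mul_nonneg (mul_nonneg ha hb) key]

private lemma quad_convex {n : ℕ} {H : Matrix (Fin n) (Fin n) ℝ} (hH : H.PosSemidef) :
    ConvexOn ℝ Set.univ (fun x : Fin n → ℝ => x ⬝ᵥ H.mulVec x) := by
  have hsym : ∀ x y : Fin n → ℝ, x ⬝ᵥ H.mulVec y = y ⬝ᵥ H.mulVec x := by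
    intro x y
    have h : Hᵀ = H := by simpa using hH.1.eq
    rw [Matrix.dotProduct_mulVec, ← Matrix.mulVec_transpose, h, dotProduct_comm]
  refine ⟨convex_univ, fun x _ y _ a b ha hb hab => ?_⟩
  have key : 0 ≤ (x - y) ⬝ᵥ H.mulVec (x - y) := by simpa using hH.dotProduct_mulVec_nonneg (x - y)
  simp only [smul_eq_mul]
  simp only [Matrix.mulVec_sub, dotProduct_sub, sub_dotProduct] at key
  simp only [Matrix.mulVec_add, Matrix.mulVec_smul, dotProduct_add,
    add_dotProduct, dotProduct_smul, smul_dotProduct, smul_eq_mul]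
  rw [hsym x y] at key ⊢
  exact aux_ineq a b _ _ _ ha hb hab key

private lemma sq_sum_eq {m k : ℕ} (M : Matrix (Fin k) (Fin m) ℝ) (y : Fin m → ℝ) :
    y ⬝ᵥ (Mᵀ * M).mulVec y = ∑ j, M.mulVec y j ^ 2 := by
  rw [← Matrix.mulVec_mulVec, Matrix.dotProduct_mulVec, Matrix.vecMul_transpose]
  simp [dotProduct, sq]

theorem stmt4 (n m k : ℕ) (hn : 1 ≤ n) (hm : 1 ≤ m) (hk : 1 ≤ k)
    (lam : ℝ) (hlam : 0 < lam) (o : Fin n → ℝ)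
    (D : Matrix (Fin m) (Fin n) ℝ) (M : Matrix (Fin k) (Fin m) ℝ)
    (g₁ g₂ : (Fin m → ℝ) → ℝ)
    (hg₁ : ConvexOn ℝ Set.univ g₁) (hg₂ : ConvexOn ℝ Set.univ g₂)
    (hH : (lam • (1 : Matrix (Fin n) (Fin n) ℝ) - Dᵀ * Mᵀ * M * D).PosSemidef) :
    ConvexOn ℝ Set.univ (fun p : (Fin n → ℝ) × (Fin m → ℝ) =>
      lam / 2 * ∑ i, (p.1 i - o i) ^ 2 - 1 / 2 * ∑ j, M.mulVec (D.mulVec p.1) j ^ 2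
        + 1 / 2 * ∑ j, M.mulVec p.2 j ^ 2 + g₁ (D.mulVec p.1)
        + g₂ ((Mᵀ * M).mulVec (D.mulVec p.1 - p.2))) := by
  set H : Matrix (Fin n) (Fin n) ℝ := lam • (1 : Matrix (Fin n) (Fin n) ℝ) - Dᵀ * Mᵀ * M * D with hHdef
  -- rewrite the quadratic part in x
  have hq : ∀ x : Fin n → ℝ,
      lam / 2 * ∑ i, (x i - o i) ^ 2 - 1 / 2 * ∑ j, M.mulVec (D.mulVec x) j ^ 2
        = 1 / 2 * (x ⬝ᵥ H.mulVec x) + (- lam * (o ⬝ᵥ x) + lam / 2 * (o ⬝ᵥ o)) := by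
    intro x
    have h1 : x ⬝ᵥ (Dᵀ * Mᵀ * M * D).mulVec x = ∑ j, M.mulVec (D.mulVec x) j ^ 2 := by
      have e : Dᵀ * Mᵀ * M * D = (M * D)ᵀ * (M * D) := by
        simp [Matrix.transpose_mul, Matrix.mul_assoc]
      rw [e, ← Matrix.mulVec_mulVec, Matrix.dotProduct_mulVec, Matrix.vecMul_transpose,
        Matrix.mulVec_mulVec]
      simp [dotProduct, sq, Matrix.mulVec_mulVec]
    have h2 : x ⬝ᵥ (lam • (1 : Matrix (Fin n) (Fin n) ℝ)).mulVec x = lam * (x ⬝ᵥ x) := by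
      simp [Matrix.smul_mulVec, Matrix.mulVec_one, dotProduct_smul]
    rw [hHdef, Matrix.sub_mulVec, dotProduct_sub, h1, h2]
    simp only [dotProduct, sq]
    have e0 : ∑ i, (x i - o i) * (x i - o i)
        = ∑ i, x i * x i - 2 * ∑ i, o i * x i + ∑ i, o i * o i := by
      rw [Finset.mul_sum, ← Finset.sum_sub_distrib, ← Finset.sum_add_distrib]
      exact Finset.sum_congr rfl (fun i _ => by ring)
    rw [e0]; ring
  have hfun : (fun p : (Fin n → ℝ) × (Fin m → ℝ) =>
      lam / 2 * ∑ i, (p.1 i - o i) ^ 2 - 1 / 2 * ∑ j, M.mulVec (D.mulVec p.1) j ^ 2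
        + 1 / 2 * ∑ j, M.mulVec p.2 j ^ 2 + g₁ (D.mulVec p.1)
        + g₂ ((Mᵀ * M).mulVec (D.mulVec p.1 - p.2)))
      = (fun p : (Fin n → ℝ) × (Fin m → ℝ) =>
      ((1 / 2 * (p.1 ⬝ᵥ H.mulVec p.1) + (- lam * (o ⬝ᵥ p.1) + lam / 2 * (o ⬝ᵥ o))
        + 1 / 2 * (p.2 ⬝ᵥ (Mᵀ * M).mulVec p.2)) + g₁ (D.mulVec p.1))
        + g₂ ((Mᵀ * M).mulVec (D.mulVec p.1 - p.2))) := by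
    funext p
    rw [hq p.1, sq_sum_eq M p.2]
  rw [hfun]
  have hMM : (Mᵀ * M).PosSemidef := by
    simpa using Matrix.posSemidef_conjTranspose_mul_self M
  -- piece 1 : quadratic in x
  have c1 : ConvexOn ℝ Set.univ (fun p : (Fin n → ℝ) × (Fin m → ℝ) =>
      1 / 2 * (p.1 ⬝ᵥ H.mulVec p.1)) := by
    refine ⟨convex_univ, fun p _ q _ a b ha hb hab => ?_⟩
    have h := (quad_convex hH).2 (Set.mem_univ p.1) (Set.mem_univ q.1) ha hb hab
    simp only [smul_eq_mul] at h ⊢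
    simp only [Prod.fst_add, Prod.smul_fst]
    nlinarith [h]
  -- piece 2 : affine in x
  have c2 : ConvexOn ℝ Set.univ (fun p : (Fin n → ℝ) × (Fin m → ℝ) =>
      - lam * (o ⬝ᵥ p.1) + lam / 2 * (o ⬝ᵥ o)) := by
    refine ⟨convex_univ, fun p _ q _ a b ha hb hab => ?_⟩
    simp only [Prod.fst_add, Prod.smul_fst, dotProduct_add, dotProduct_smul,
      smul_eq_mul]
    apply le_of_eq
    have hb' : b = 1 - a := by linarith
    subst hb'; ring
  -- piece 3 : quadratic in y
  have c3 : ConvexOn ℝ Set.univ (fun p : (Fin n → ℝ) × (Fin m → ℝ) =>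
      1 / 2 * (p.2 ⬝ᵥ (Mᵀ * M).mulVec p.2)) := by
    refine ⟨convex_univ, fun p _ q _ a b ha hb hab => ?_⟩
    have h := (quad_convex hMM).2 (Set.mem_univ p.2) (Set.mem_univ q.2) ha hb hab
    simp only [smul_eq_mul] at h ⊢
    simp only [Prod.snd_add, Prod.smul_snd]
    nlinarith [h]
  -- piece 4 : g₁ composed with linear map
  have c4 : ConvexOn ℝ Set.univ (fun p : (Fin n → ℝ) × (Fin m → ℝ) =>
      g₁ (D.mulVec p.1)) := by
    refine ⟨convex_univ, fun p _ q _ a b ha hb hab => ?_⟩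
    dsimp only
    have e : D.mulVec ((a • p + b • q).1) = a • D.mulVec p.1 + b • D.mulVec q.1 := by
      simp [Matrix.mulVec_add, Matrix.mulVec_smul]
    rw [e]
    exact hg₁.2 (Set.mem_univ _) (Set.mem_univ _) ha hb hab
  -- piece 5 : g₂ composed with linear map
  have c5 : ConvexOn ℝ Set.univ (fun p : (Fin n → ℝ) × (Fin m → ℝ) =>
      g₂ ((Mᵀ * M).mulVec (D.mulVec p.1 - p.2))) := by
    refine ⟨convex_univ, fun p _ q _ a b ha hb hab => ?_⟩
    dsimp only
    have e : (Mᵀ * M).mulVec (D.mulVec ((a • p + b • q).1) - (a • p + b • q).2)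
        = a • (Mᵀ * M).mulVec (D.mulVec p.1 - p.2)
          + b • (Mᵀ * M).mulVec (D.mulVec q.1 - q.2) := by
      simp only [Prod.fst_add, Prod.smul_fst, Prod.snd_add, Prod.smul_snd,
        Matrix.mulVec_add, Matrix.mulVec_smul, Matrix.mulVec_sub, smul_sub]
      module
    rw [e]
    exact hg₂.2 (Set.mem_univ _) (Set.mem_univ _) ha hb hab
  exact (((c1.add c2).add c3).add c4).add c5
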